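/- (Remark 3, necessity) Suppose there exists x̄ ∈ C with Ψ^H x̄ = 0 (i.e., N(Ψ^H) ∩ C ≠ ∅). If X_u ∩ Q = ∅ for every u ≥ 0 (i.e., U = +∞), then for every x⋄ ∈ X⋄ the set ∇L(x⋄) + N_C(x⋄) is disjoint from Re(R(Ψ)) = {Re(Ψ w) : w ∈ ℂ^{p'}}. -/

import Mathlib

open Matrix
open scoped RealInnerProductSpace ENNReal

noncomputable section

def cnorm1 {n : ℕ} (z : Fin n → ℂ) : ℝ := ∑ j, ‖z j‖

noncomputable def cnormInf {n : ℕ} (z : Fin n → ℂ) : ℝ := ⨆ j, ‖z j‖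

def psiH {p p' : ℕ} (Ψ : Matrix (Fin p) (Fin p') ℂ) (x : EuclideanSpace ℝ (Fin p)) :
    Fin p' → ℂ :=
  Matrix.mulVec Ψᴴ fun i => (x i : ℂ)

def rePsi {p p' : ℕ} (Ψ : Matrix (Fin p) (Fin p') ℂ) (w : Fin p' → ℂ) :
    EuclideanSpace ℝ (Fin p) :=
  WithLp.toLp 2 fun i => (Matrix.mulVec Ψ w i).re

def Gset {n : ℕ} (s : Fin n → ℂ) : Set (Fin n → ℂ) :=
  {w | ∀ j, ‖w j‖ ≤ 1 ∧ (s j ≠ 0 → w j = s j / (‖s j‖ : ℂ))}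

def normalCone {p : ℕ} (C : Set (EuclideanSpace ℝ (Fin p))) (x : EuclideanSpace ℝ (Fin p)) :
    Set (EuclideanSpace ℝ (Fin p)) :=
  {a | ∀ y ∈ C, ⟪a, y - x⟫ ≤ 0}

def XuSet {p p' : ℕ} (C : Set (EuclideanSpace ℝ (Fin p))) (L : EuclideanSpace ℝ (Fin p) → ℝ)
    (Ψ : Matrix (Fin p) (Fin p') ℂ) (u : ℝ) : Set (EuclideanSpace ℝ (Fin p)) :=
  {x ∈ C | ∀ χ ∈ C, L x + u * cnorm1 (psiH Ψ x) ≤ L χ + u * cnorm1 (psiH Ψ χ)}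

def QSet {p p' : ℕ} (C : Set (EuclideanSpace ℝ (Fin p))) (Ψ : Matrix (Fin p) (Fin p') ℂ) :
    Set (EuclideanSpace ℝ (Fin p)) :=
  {x ∈ C | ∀ χ ∈ C, cnorm1 (psiH Ψ x) ≤ cnorm1 (psiH Ψ χ)}

def XdSet {p p' : ℕ} (C : Set (EuclideanSpace ℝ (Fin p))) (L : EuclideanSpace ℝ (Fin p) → ℝ)
    (Ψ : Matrix (Fin p) (Fin p') ℂ) : Set (EuclideanSpace ℝ (Fin p)) :=
  {x ∈ QSet C Ψ | ∀ χ ∈ QSet C Ψ, L x ≤ L χ}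

def Ubound {p p' : ℕ} (C : Set (EuclideanSpace ℝ (Fin p))) (L : EuclideanSpace ℝ (Fin p) → ℝ)
    (Ψ : Matrix (Fin p) (Fin p') ℂ) : ℝ≥0∞ :=
  sInf (ENNReal.ofReal '' {u : ℝ | 0 ≤ u ∧ (XuSet C L Ψ u ∩ QSet C Ψ).Nonempty})


-- auxiliary lemmas
lemma subgrad {E : Type*} [NormedAddCommGroup E] [InnerProductSpace ℝ E] [CompleteSpace E]
    {L : E → ℝ} (hL : ConvexOn ℝ Set.univ L) {x g : E} (hg : HasGradientAt L g x) (y : E) :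
    L x + ⟪g, y - x⟫ ≤ L y := by
  rcases eq_or_ne y x with rfl | hne
  · simp
  set f : ℝ → ℝ := fun t => L (x + t • (y - x)) with hf
  have hconv : ConvexOn ℝ Set.univ f := by
    have := hL.comp_affineMap (AffineMap.lineMap x y)
    simp only [Set.preimage_univ] at this
    have hfeq : f = L ∘ AffineMap.lineMap x y := by
      funext t
      simp [hf, AffineMap.lineMap_apply, Function.comp, add_comm]
    rw [hfeq]; exact this
  have hderiv : HasDerivAt f ⟪g, y - x⟫ 0 := by
    have hc : HasDerivAt (fun t : ℝ => x + t • (y - x)) (y - x) 0 := by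
      simpa using ((hasDerivAt_id (0:ℝ)).smul_const (y - x)).const_add x
    have hfd : HasFDerivAt L ((InnerProductSpace.toDual ℝ E) g) (x + (0:ℝ) • (y - x)) := by
      simpa using hg.hasFDerivAt
    have := hfd.comp_hasDerivAt 0 hc
    simp only [InnerProductSpace.toDual_apply_apply] at this
    exact this
  have hs := hconv.le_slope_of_hasDerivAt (Set.mem_univ (0:ℝ)) (Set.mem_univ (1:ℝ))
    one_pos hderiv
  rw [slope_def_field] at hs
  simp only [hf] at hs
  simp only [zero_smul, add_zero, one_smul, add_sub_cancel] at hs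
  have : L x + ⟪g, y - x⟫ ≤ L x + (L y - L x) / (1 - 0) := by linarith
  simpa using this

lemma inner_rePsi {p p' : ℕ} (Ψ : Matrix (Fin p) (Fin p') ℂ) (w : Fin p' → ℂ)
    (x : EuclideanSpace ℝ (Fin p)) :
    ⟪rePsi Ψ w, x⟫ = ∑ j, (w j * (starRingEnd ℂ) (psiH Ψ x j)).re := by
  have lhs : ⟪rePsi Ψ w, x⟫ = ∑ i, ∑ j, (Ψ i j * w j * (x i : ℂ)).re := by
    rw [PiLp.inner_apply]
    refine Finset.sum_congr rfl fun i _ => ?_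
    simp only [RCLike.inner_apply, starRingEnd_apply, star_trivial, rePsi,
      Matrix.mulVec, dotProduct]
    rw [← Complex.re_ofReal_mul, Finset.mul_sum, Complex.re_sum]
    refine Finset.sum_congr rfl fun j _ => ?_
    ring_nf
  have rhs : (∑ j, (w j * (starRingEnd ℂ) (psiH Ψ x j)).re)
      = ∑ j, ∑ i, (Ψ i j * w j * (x i : ℂ)).re := by
    refine Finset.sum_congr rfl fun j _ => ?_
    simp only [psiH, Matrix.mulVec, dotProduct, Matrix.conjTranspose_apply, map_sum,
      Finset.mul_sum]
    rw [Complex.re_sum]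
    refine Finset.sum_congr rfl fun i _ => ?_
    rw [map_mul (starRingEnd ℂ)]
    have h1 : (starRingEnd ℂ) (star (Ψ i j)) = Ψ i j := star_star _
    have h2 : (starRingEnd ℂ) ((x i : ℂ)) = (x i : ℂ) := Complex.conj_ofReal _
    rw [h1, h2]
    ring_nf
  rw [lhs, rhs, Finset.sum_comm]


theorem statement_8 {p p' : ℕ} (hp : 0 < p) (hp' : 0 < p')
    (C : Set (EuclideanSpace ℝ (Fin p))) (hCne : C.Nonempty) (hCcl : IsClosed C)
    (hCcv : Convex ℝ C)
    (L : EuclideanSpace ℝ (Fin p) → ℝ) (hLcv : ConvexOn ℝ Set.univ L)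
    (gradL : EuclideanSpace ℝ (Fin p) → EuclideanSpace ℝ (Fin p))
    (hLd : ∀ x, HasGradientAt L (gradL x) x)
    (hLb : BddBelow (L '' C))
    (Ψ : Matrix (Fin p) (Fin p') ℂ) (hXd : (XdSet C L Ψ).Nonempty)
    (hbar : ∃ x ∈ C, psiH Ψ x = 0)
    (hUinf : ∀ u : ℝ, 0 ≤ u → XuSet C L Ψ u ∩ QSet C Ψ = ∅) :
    ∀ xd ∈ XdSet C L Ψ,
      ∀ a ∈ normalCone C xd, ∀ w : Fin p' → ℂ, gradL xd + a ≠ rePsi Ψ w := by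
  intro xd hxd a ha w heq
  obtain ⟨xb, hxbC, hxb0⟩ := hbar
  have hQxd : xd ∈ QSet C Ψ := hxd.1
  have hznn : (0:ℝ) ≤ cnorm1 (psiH Ψ xd) :=
    Finset.sum_nonneg fun j _ => norm_nonneg _
  have hz : cnorm1 (psiH Ψ xd) = 0 := by
    have h1 := hQxd.2 xb hxbC
    have h2 : cnorm1 (psiH Ψ xb) = 0 := by simp [hxb0, cnorm1]
    linarith
  have hzero : psiH Ψ xd = 0 := by
    funext j
    have := (Finset.sum_eq_zero_iff_of_nonneg
      (fun j _ => norm_nonneg (psiH Ψ xd j))).mp hz j (Finset.mem_univ j)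
    simpa using this
  set u := cnormInf w with hu_def
  have hwle : ∀ j, ‖w j‖ ≤ u := by
    intro j
    show ‖w j‖ ≤ ⨆ j, ‖w j‖
    exact le_ciSup (f := fun j => ‖w j‖) (Set.Finite.bddAbove (Set.finite_range _)) j
  have hu : 0 ≤ u := le_trans (norm_nonneg _) (hwle ⟨0, hp'⟩)
  refine Set.eq_empty_iff_forall_notMem.mp (hUinf u hu) xd ⟨⟨hxd.1.1, fun χ hχ => ?_⟩, hQxd⟩
  have hsub := subgrad hLcv (hLd xd) χ
  have hxdinner : ⟪rePsi Ψ w, xd⟫ = 0 := by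
    rw [inner_rePsi, hzero]; simp
  have hbound : -(u * cnorm1 (psiH Ψ χ)) ≤ ⟪rePsi Ψ w, χ⟫ := by
    rw [inner_rePsi, cnorm1, Finset.mul_sum, ← Finset.sum_neg_distrib]
    refine Finset.sum_le_sum fun j _ => ?_
    have h1 : -‖w j * (starRingEnd ℂ) (psiH Ψ χ j)‖
        ≤ (w j * (starRingEnd ℂ) (psiH Ψ χ j)).re := by
      have ha1 := Complex.abs_re_le_norm (w j * (starRingEnd ℂ) (psiH Ψ χ j))
      have ha2 := neg_abs_le ((w j * (starRingEnd ℂ) (psiH Ψ χ j)).re)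
      linarith
    have h2 : ‖w j * (starRingEnd ℂ) (psiH Ψ χ j)‖
        ≤ u * ‖psiH Ψ χ j‖ := by
      rw [norm_mul, Complex.norm_conj]
      exact mul_le_mul_of_nonneg_right (hwle j) (norm_nonneg _)
    linarith
  have hgl : gradL xd = rePsi Ψ w - a := eq_sub_of_add_eq heq
  have hNa : ⟪a, χ - xd⟫ ≤ 0 := ha χ hχ
  have hinner : ⟪gradL xd, χ - xd⟫ = ⟪rePsi Ψ w, χ⟫ - ⟪rePsi Ψ w, xd⟫ - ⟪a, χ - xd⟫ := by
    rw [hgl, inner_sub_left, inner_sub_right]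
  rw [hz]
  have hnn : (0:ℝ) ≤ u * cnorm1 (psiH Ψ χ) :=
    mul_nonneg hu (Finset.sum_nonneg fun j _ => norm_nonneg _)
  linarith [hsub, hinner, hxdinner, hbound, hNa]
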